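/- Let n ≥ 2 and r, s positive integers with r | s, s | n. The multiple (lcm(rs,n)/n)·(−,−) of the standard scalar product is even on the lattice Λ_r = Q(A_{n−1}^∨) + ⟨(n/r)ω_1⟩ if and only if it is NOT the case that v_2(r) = v_2(s) ≥ v_2(n)/2 > 0, where v_2 denotes the 2-adic valuation. Equivalently, the index of the even-forms lattice inside the sc-even-forms lattice (both rank one) is 2 exactly when v_2(r) = v_2(s) ≥ v_2(n)/2 > 0, and 1 otherwise. -/

import Mathlib

/-- The `i`-th standard basis vector `ε_i` of `ℚ^n`. -/
def stdBasisQ (n : ℕ) (i : Fin n) : Fin n → ℚ := fun k => if k = i then 1 else 0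

/-- The coroot lattice `Q(A_{n−1}^∨)`, generated by the elements `ε_i − ε_j`. -/
def rootLatticeA (n : ℕ) : Submodule ℤ (Fin n → ℚ) :=
  Submodule.span ℤ {v : Fin n → ℚ | ∃ i j : Fin n, v = stdBasisQ n i - stdBasisQ n j}

/-- The fundamental coweight `ω_1 = ε_1 − (Σ_i ε_i)/n`. -/
def omegaOne (n : ℕ) : Fin n → ℚ := fun k => (if (k : ℕ) = 0 then 1 else 0) - 1 / n

/-- `Λ_r = Q(A_{n−1}^∨) + ⟨(n/r)ω_1⟩`, the cocharacter lattice of the maximal torus of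
`SL_n/μ_r`. -/
def latticeSL (n r : ℕ) : Submodule ℤ (Fin n → ℚ) :=
  rootLatticeA n ⊔ Submodule.span ℤ {((n : ℚ) / r) • omegaOne n}

lemma padic_lcm_max (a b : ℕ) (ha : a ≠ 0) (hb : b ≠ 0) :
    padicValNat 2 (Nat.lcm a b) = max (padicValNat 2 a) (padicValNat 2 b) := by
  have h := Nat.factorization_lcm ha hb
  have h2 := congrFun (congrArg DFunLike.coe h) 2
  simp only [Finsupp.sup_apply] at h2
  simpa only [← Nat.factorization_def _ Nat.prime_two] using h2

lemma odd_iff_padic_zero (m : ℕ) (hm : m ≠ 0) : Odd m ↔ padicValNat 2 m = 0 := by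
  rw [Nat.odd_iff, padicValNat.eq_zero_iff, Nat.dvd_iff_mod_eq_zero]
  omega

/-- The key number-theoretic parity computation. -/
lemma parity_lemma (n r s : ℕ) (hn : 2 ≤ n) (hr : 0 < r) (hrs : r ∣ s) (hsn : s ∣ n) :
    Odd (Nat.lcm (r * s) n / (r * r) * (n - 1)) ↔
      (padicValNat 2 r = padicValNat 2 s ∧ padicValNat 2 n ≤ 2 * padicValNat 2 r ∧
        0 < padicValNat 2 n) := by
  have hn0 : n ≠ 0 := by omega
  have hs : 0 < s := Nat.pos_of_dvd_of_pos hsn (by omega)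
  have hrs0 : r * s ≠ 0 := by positivity
  have hL0 : Nat.lcm (r * s) n ≠ 0 := Nat.lcm_ne_zero hrs0 hn0
  set L := Nat.lcm (r * s) n with hL
  have hrrL : r * r ∣ L := dvd_trans (Nat.mul_dvd_mul_left r hrs) (Nat.dvd_lcm_left _ _)
  set M := L / (r * r) with hM
  have hMrr : M * (r * r) = L := Nat.div_mul_cancel hrrL
  have hM0 : M ≠ 0 := fun h => hL0 (by rw [← hMrr, h, zero_mul])
  -- valuations
  have hvL : padicValNat 2 L = max (padicValNat 2 (r * s)) (padicValNat 2 n) :=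
    padic_lcm_max _ _ hrs0 hn0
  have hvrs : padicValNat 2 (r * s) = padicValNat 2 r + padicValNat 2 s :=
    padicValNat.mul (by omega) (by omega)
  have hvM : padicValNat 2 L = padicValNat 2 M + (padicValNat 2 r + padicValNat 2 r) := by
    rw [← hMrr, padicValNat.mul hM0 (by positivity), padicValNat.mul (by omega) (by omega)]
  -- r ∣ s gives v2 r ≤ v2 s
  have hvle : padicValNat 2 r ≤ padicValNat 2 s := by
    obtain ⟨t, rfl⟩ := hrs
    have ht : t ≠ 0 := by rintro rfl; simp at hs
    rw [padicValNat.mul (by omega) ht]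
    omega
  -- n - 1 parity
  have hodd1 : Odd (n - 1) ↔ 0 < padicValNat 2 n := by
    rw [Nat.odd_iff, Nat.pos_iff_ne_zero]
    rw [ne_eq, padicValNat.eq_zero_iff]
    push_neg
    constructor
    · intro h; exact ⟨by omega, hn0, by omega⟩
    · rintro ⟨-, -, h⟩; omega
  have hoddM : Odd M ↔ padicValNat 2 M = 0 := odd_iff_padic_zero M hM0
  rw [Nat.odd_mul, hodd1, hoddM]
  rw [hvrs] at hvL
  rcases max_cases (padicValNat 2 r + padicValNat 2 s) (padicValNat 2 n) with ⟨h1, h2⟩ | ⟨h1, h2⟩ <;>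
    rw [h1] at hvL <;> omega

lemma sum_ite_zero' {n : ℕ} (hn : 0 < n) (g : Fin n → ℚ) :
    ∑ i : Fin n, (if (i : ℕ) = 0 then g i else 0) = g ⟨0, hn⟩ := by
  rw [Finset.sum_eq_single (⟨0, hn⟩ : Fin n)]
  · simp
  · intro b _ hb
    rw [if_neg]
    simpa [Fin.ext_iff] using hb
  · intro h
    exact absurd (Finset.mem_univ _) h

/-- Every element of `latticeSL n r` decomposes as an integer vector with zero coordinate sum
plus an integer multiple of `(n/r)ω₁`. -/
lemma latticeSL_decomp (n r : ℕ) (x : Fin n → ℚ) (hx : x ∈ latticeSL n r) :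
    ∃ (f : Fin n → ℤ) (k : ℤ), (∑ i, f i = 0) ∧
      ∀ i, x i = (f i : ℚ) + (k : ℚ) * (((n : ℚ) / r) * ((if (i : ℕ) = 0 then 1 else 0) - 1 / n)) := by
  rw [latticeSL, Submodule.mem_sup] at hx
  obtain ⟨a, ha, b, hb, rfl⟩ := hx
  rw [Submodule.mem_span_singleton] at hb
  obtain ⟨k, rfl⟩ := hb
  have key : ∃ f : Fin n → ℤ, (∑ i, f i = 0) ∧ ∀ i, a i = (f i : ℚ) := by
    induction ha using Submodule.span_induction with
    | mem v hv =>
      obtain ⟨i, j, rfl⟩ := hv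
      refine ⟨fun k => (if k = i then 1 else 0) - (if k = j then 1 else 0), ?_, ?_⟩
      · rw [Finset.sum_sub_distrib]
        simp [Finset.sum_ite_eq']
      · intro m
        simp [stdBasisQ, apply_ite (Int.cast : ℤ → ℚ)]
    | zero => exact ⟨0, by simp, by simp⟩
    | add u v hu hv ihu ihv =>
      obtain ⟨f, hf1, hf2⟩ := ihu
      obtain ⟨g, hg1, hg2⟩ := ihv
      exact ⟨f + g, by simp only [Pi.add_apply]; rw [Finset.sum_add_distrib, hf1, hg1, add_zero], fun i => by
        simp [hf2 i, hg2 i]⟩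
    | smul z v hv ihv =>
      obtain ⟨f, hf1, hf2⟩ := ihv
      refine ⟨z • f, ?_, fun i => ?_⟩
      · simp only [Pi.smul_apply, smul_eq_mul]
        rw [← Finset.mul_sum, hf1, mul_zero]
      · simp [hf2 i, mul_comm]
  obtain ⟨f, hf1, hf2⟩ := key
  refine ⟨f, k, hf1, fun i => ?_⟩
  simp only [Pi.add_apply, Pi.smul_apply]
  simp only [zsmul_eq_mul, smul_eq_mul, omegaOne, hf2 i]

/-- The quadratic form evaluated on a decomposed lattice element. -/
lemma sum_sq_formula (n r : ℕ) (hn : 2 ≤ n) (hr : 0 < r) (f : Fin n → ℤ) (k : ℤ)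
    (hf : ∑ i, f i = 0) :
    ∑ i, ((f i : ℚ) + (k : ℚ) * (((n : ℚ) / r) * ((if (i : ℕ) = 0 then 1 else 0) - 1 / n))) ^ 2
      = (∑ i, (f i : ℚ) ^ 2) + 2 * (k : ℚ) * ((n : ℚ) / r) * (f (⟨0, by omega⟩ : Fin n) : ℚ)
        + (k : ℚ) ^ 2 * (((n : ℚ) ^ 2 - (n : ℚ)) / (r : ℚ) ^ 2) := by
  have hn0 : (n : ℚ) ≠ 0 := by positivity
  have hr0 : (r : ℚ) ≠ 0 := by positivity
  have key : ∀ i : Fin n,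
      ((f i : ℚ) + (k : ℚ) * (((n : ℚ) / r) * ((if (i : ℕ) = 0 then 1 else 0) - 1 / n))) ^ 2
      = ((f i : ℚ) ^ 2 - 2 * (k : ℚ) * (f i : ℚ) / r + (k : ℚ) ^ 2 / (r : ℚ) ^ 2)
        + (if (i : ℕ) = 0 then
            (2 * (k : ℚ) * ((n : ℚ) / r) * (f i : ℚ)
              + (k : ℚ) ^ 2 * (n : ℚ) ^ 2 / (r : ℚ) ^ 2
              - 2 * (k : ℚ) ^ 2 * (n : ℚ) / (r : ℚ) ^ 2) else 0) := by
    intro i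
    by_cases h : (i : ℕ) = 0 <;> simp only [h, if_true, if_false] <;> field_simp <;> ring
  simp_rw [key]
  rw [Finset.sum_add_distrib, sum_ite_zero' (by omega)]
  have h1 : ∑ i, ((f i : ℚ) ^ 2 - 2 * (k : ℚ) * (f i : ℚ) / r + (k : ℚ) ^ 2 / (r : ℚ) ^ 2)
      = (∑ i, (f i : ℚ) ^ 2) - (2 * (k : ℚ) / r) * (∑ i, (f i : ℚ))
        + (n : ℚ) * ((k : ℚ) ^ 2 / (r : ℚ) ^ 2) := by
    rw [Finset.sum_add_distrib, Finset.sum_sub_distrib, Finset.sum_const, Finset.card_univ,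
      Fintype.card_fin, nsmul_eq_mul, Finset.mul_sum]
    congr 1
    congr 1
    exact Finset.sum_congr rfl fun i _ => by ring
  have h2 : (∑ i, (f i : ℚ)) = 0 := by exact_mod_cast congrArg (Int.cast : ℤ → ℚ) hf
  rw [h1, h2]
  field_simp
  ring

theorem stmt10 (n r s : ℕ) (hn : 2 ≤ n) (hr : 0 < r) (hrs : r ∣ s) (hsn : s ∣ n) :
    (∀ x ∈ latticeSL n r,
        ∃ m : ℤ, ((Nat.lcm (r * s) n / n : ℕ) : ℚ) * ∑ i, x i * x i = 2 * (m : ℚ)) ↔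
      ¬ (padicValNat 2 r = padicValNat 2 s ∧ padicValNat 2 n ≤ 2 * padicValNat 2 r ∧
          0 < padicValNat 2 n) := by
  have hn0 : n ≠ 0 := by omega
  have hs : 0 < s := Nat.pos_of_dvd_of_pos hsn (by omega)
  set L := Nat.lcm (r * s) n with hLdef
  have hL0 : L ≠ 0 := Nat.lcm_ne_zero (by positivity) hn0
  have hnL : n ∣ L := Nat.dvd_lcm_right _ _
  have hrL : r ∣ L := dvd_trans (Dvd.intro s rfl) (Nat.dvd_lcm_left _ _)
  have hrrL : r * r ∣ L := dvd_trans (Nat.mul_dvd_mul_left r hrs) (Nat.dvd_lcm_left _ _)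
  set K := L / n with hKdef
  set A := L / r with hAdef
  set E := L / (r * r) * (n - 1) with hEdef
  have hKn : K * n = L := Nat.div_mul_cancel hnL
  have hAr : A * r = L := Nat.div_mul_cancel hrL
  have hErr : E * (r * r) = K * (n * (n - 1)) := by
    have h1 : L / (r * r) * (r * r) = L := Nat.div_mul_cancel hrrL
    calc E * (r * r) = L / (r * r) * (r * r) * (n - 1) := by ring
      _ = L * (n - 1) := by rw [h1]
      _ = K * n * (n - 1) := by rw [hKn]
      _ = K * (n * (n - 1)) := by ring
  have hr0 : (r : ℚ) ≠ 0 := by positivity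
  have hn0' : (n : ℚ) ≠ 0 := by positivity
  have hKnr : (K : ℚ) * ((n : ℚ) / r) = (A : ℚ) := by
    rw [← mul_div_assoc, div_eq_iff hr0]
    exact_mod_cast hKn.trans hAr.symm
  have hKE : (K : ℚ) * (((n : ℚ) ^ 2 - n) / (r : ℚ) ^ 2) = (E : ℚ) := by
    rw [← mul_div_assoc, div_eq_iff (by positivity : ((r : ℚ) ^ 2) ≠ 0)]
    have h2 := congrArg (Nat.cast : ℕ → ℚ) hErr
    push_cast [Nat.cast_sub (by omega : 1 ≤ n)] at h2
    linear_combination -h2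
  have hEparity := parity_lemma n r s hn hr hrs hsn
  constructor
  · intro h hcond
    have hv : ((n : ℚ) / r) • omegaOne n ∈ latticeSL n r :=
      Submodule.mem_sup_right (Submodule.mem_span_singleton_self _)
    obtain ⟨m, hm⟩ := h _ hv
    have hform := sum_sq_formula n r hn hr (fun _ => 0) 1 (by simp)
    have hpt : ∀ i : Fin n, (((n : ℚ) / r) • omegaOne n) i * (((n : ℚ) / r) • omegaOne n) i
        = (((0 : ℤ) : ℚ) + ((1 : ℤ) : ℚ)
            * (((n : ℚ) / r) * ((if (i : ℕ) = 0 then 1 else 0) - 1 / n))) ^ 2 := by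
      intro i
      simp only [Pi.smul_apply, smul_eq_mul, omegaOne, Int.cast_zero, Int.cast_one]
      ring
    rw [Finset.sum_congr rfl (fun i _ => hpt i), hform] at hm
    have hm2 : (K : ℚ) * (((n : ℚ) ^ 2 - n) / (r : ℚ) ^ 2) = 2 * (m : ℚ) := by
      rw [← hm]; simp
    rw [hKE] at hm2
    have hEm : (E : ℤ) = 2 * m := by exact_mod_cast hm2
    have hodd : Odd E := hEparity.mpr hcond
    rw [Nat.odd_iff] at hodd
    omega
  · intro hcond x hx
    obtain ⟨f, k, hf, hxi⟩ := latticeSL_decomp n r x hx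
    have hEeven : Even E := Nat.not_odd_iff_even.mp fun h => hcond (hEparity.mp h)

    obtain ⟨e, he⟩ := hEeven
    have hS1 : ∃ m1 : ℤ, (∑ i, (f i : ℚ) ^ 2) = 2 * (m1 : ℚ) := by
      have heven : Even (∑ i, (f i) ^ 2) := by
        have h3 : Even (∑ i, ((f i) ^ 2 - f i)) := by
          refine Finset.even_sum _ fun i _ => ?_
          have h4 := Int.even_mul_succ_self (f i - 1)
          have h5 : (f i) ^ 2 - f i = (f i - 1) * (f i - 1 + 1) := by ring
          rwa [← h5] at h4
        have h6 : (∑ i, (f i) ^ 2) = (∑ i, ((f i) ^ 2 - f i)) + ∑ i, f i := by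
          rw [Finset.sum_sub_distrib]
          ring
        rw [h6, hf, add_zero]
        exact h3
      obtain ⟨m1, hm1⟩ := heven
      refine ⟨m1, ?_⟩
      have : ((∑ i, (f i) ^ 2 : ℤ) : ℚ) = ((m1 + m1 : ℤ) : ℚ) :=
        congrArg (fun z : ℤ => (z : ℚ)) hm1
      push_cast at this
      rw [this]
      ring
    obtain ⟨m1, hm1⟩ := hS1
    refine ⟨K * m1 + k * (f (⟨0, by omega⟩ : Fin n)) * A + k ^ 2 * e, ?_⟩
    have hx2 : ∀ i, x i * x i
        = ((f i : ℚ) + (k : ℚ) * (((n : ℚ) / r) * ((if (i : ℕ) = 0 then 1 else 0) - 1 / n))) ^ 2 :=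
      fun i => by rw [hxi i]; ring
    rw [Finset.sum_congr rfl (fun i _ => hx2 i), sum_sq_formula n r hn hr f k hf, hm1]
    have hE2 : (E : ℚ) = 2 * (e : ℚ) := by rw [he]; push_cast; ring
    push_cast
    linear_combination (2 * (k : ℚ) * ((f (⟨0, by omega⟩ : Fin n) : ℤ) : ℚ)) * hKnr
      + (k : ℚ) ^ 2 * hKE + (k : ℚ) ^ 2 * hE2
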